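/- Let G be the distance graph of points x₁,...,x_N in ℝ^d (with Euclidean norm), where vertices are the points (distinguished by index) and two points are adjacent if their distance is strictly less than 1. Assume each point is at Euclidean distance at most √3/4 from the line generated by (1,0,...,0). Then G contains no induced cycle of length 5 or more. -/

import Mathlib

open SimpleGraph

/-- The distance graph of a sequence of points: indices `i ≠ j` are adjacent
when the corresponding points are at distance `< 1`. -/
def distGraph {E : Type*} [NormedAddCommGroup E] {N : ℕ} (x : Fin N → E) :
    SimpleGraph (Fin N) where
  Adj i j := i ≠ j ∧ ‖x i - x j‖ < 1
  symm := by
    constructor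
    intro i j ⟨hij, hd⟩
    exact ⟨hij.symm, by rwa [norm_sub_rev]⟩
  loopless := by constructor; intro i ⟨h, _⟩; exact h rfl

open Fin.NatCast Fin.CommRing

private lemma fin_ne' (k a b : ℕ) (ha : a < k+5) (hb : b < k+5) (hab : a ≠ b) :
    ((a : Fin (k+5)) ≠ (b : Fin (k+5))) := by
  simpa [Fin.ext_iff, Fin.val_natCast, Nat.mod_eq_of_lt ha, Nat.mod_eq_of_lt hb] using hab

private lemma keyR (A au av aw : ℝ) (h1 : A ≤ au) (h2 : au < A + 1/2)
    (h3 : A + 1/2 ≤ av) (h4 : av < A + 1)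
    (h5 : 1/2 ≤ |au - av|) (h6 : A + 1/2 ≤ aw) (h7 : aw < au + 1)
    (h8 : 1/2 ≤ |av - aw|) : False := by
  rcases le_abs.mp h5 with h | h <;> rcases le_abs.mp h8 with h' | h' <;> linarith

private lemma cycle_combo (k : ℕ) (a : Fin (k+5) → ℝ)
    (hadj : ∀ i j, (cycleGraph (k+5)).Adj i j → |a i - a j| < 1)
    (hnadj : ∀ i j, i ≠ j → ¬ (cycleGraph (k+5)).Adj i j → 1/2 ≤ |a i - a j|) :
    False := by
  obtain ⟨m, hm⟩ := Finite.exists_min a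
  have ne1 : (1 : Fin (k+5)) ≠ 0 := by
    simpa using fin_ne' k 1 0 (by omega) (by omega) (by omega)
  have ne2 : (2 : Fin (k+5)) ≠ 0 := by
    simpa using fin_ne' k 2 0 (by omega) (by omega) (by omega)
  have ne3 : (3 : Fin (k+5)) ≠ 0 := by
    simpa using fin_ne' k 3 0 (by omega) (by omega) (by omega)
  have ne4 : (4 : Fin (k+5)) ≠ 0 := by
    simpa using fin_ne' k 4 0 (by omega) (by omega) (by omega)
  -- adjacency facts
  have adj_p : (cycleGraph (k+5)).Adj m (m+1) := cycleGraph_adj.mpr (Or.inr (by ring))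
  have adj_q : (cycleGraph (k+5)).Adj m (m-1) := cycleGraph_adj.mpr (Or.inl (by ring))
  have adj_pp : (cycleGraph (k+5)).Adj (m+1) (m+2) := cycleGraph_adj.mpr (Or.inr (by ring))
  have adj_qq : (cycleGraph (k+5)).Adj (m-1) (m-2) := cycleGraph_adj.mpr (Or.inl (by ring))
  -- non-adjacency / distinctness facts
  have ne_pq : (m+1 : Fin (k+5)) ≠ m-1 := fun h => ne2 (by linear_combination h)
  have na_pq : ¬ (cycleGraph (k+5)).Adj (m+1) (m-1) := by
    rw [cycleGraph_adj]; rintro (h | h)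
    · exact ne1 (by linear_combination h)
    · exact ne3 (by linear_combination -h)
  have ne_mp2 : (m : Fin (k+5)) ≠ m+2 := fun h => ne2 (by linear_combination -h)
  have na_mp2 : ¬ (cycleGraph (k+5)).Adj m (m+2) := by
    rw [cycleGraph_adj]; rintro (h | h)
    · exact ne3 (by linear_combination -h)
    · exact ne1 (by linear_combination h)
  have ne_mq2 : (m : Fin (k+5)) ≠ m-2 := fun h => ne2 (by linear_combination h)
  have na_mq2 : ¬ (cycleGraph (k+5)).Adj m (m-2) := by
    rw [cycleGraph_adj]; rintro (h | h)
    · exact ne1 (by linear_combination h)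
    · exact ne3 (by linear_combination -h)
  have ne_q1p2 : (m-1 : Fin (k+5)) ≠ m+2 := fun h => ne3 (by linear_combination -h)
  have na_q1p2 : ¬ (cycleGraph (k+5)).Adj (m-1) (m+2) := by
    rw [cycleGraph_adj]; rintro (h | h)
    · exact ne4 (by linear_combination -h)
    · exact ne2 (by linear_combination h)
  have ne_p1q2 : (m+1 : Fin (k+5)) ≠ m-2 := fun h => ne3 (by linear_combination h)
  have na_p1q2 : ¬ (cycleGraph (k+5)).Adj (m+1) (m-2) := by
    rw [cycleGraph_adj]; rintro (h | h)
    · exact ne2 (by linear_combination h)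
    · exact ne4 (by linear_combination -h)
  -- real facts
  set A := a m with hA
  have far : ∀ j, 1/2 ≤ |a m - a j| → A + 1/2 ≤ a j := by
    intro j h
    rcases le_abs.mp h with h' | h' <;> [skip; linarith] <;> linarith [hm j]
  have hb := abs_lt.mp (hadj m (m+1) adj_p)
  have hc := abs_lt.mp (hadj m (m-1) adj_q)
  have hbc := hnadj (m+1) (m-1) ne_pq na_pq
  by_cases h1 : a (m+1) < A + 1/2 <;> by_cases h2 : a (m-1) < A + 1/2
  · rcases le_abs.mp hbc with h | h <;> linarith [hm (m+1), hm (m-1)]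
  · exact keyR A (a (m+1)) (a (m-1)) (a (m+2)) (hm _) h1 (not_lt.mp h2) (by linarith)
      hbc (far _ (hnadj m (m+2) ne_mp2 na_mp2))
      (by linarith [abs_lt.mp (hadj (m+1) (m+2) adj_pp)])
      (hnadj (m-1) (m+2) ne_q1p2 na_q1p2)
  · exact keyR A (a (m-1)) (a (m+1)) (a (m-2)) (hm _) h2 (not_lt.mp h1) (by linarith)
      (by rw [abs_sub_comm]; exact hbc) (far _ (hnadj m (m-2) ne_mq2 na_mq2))
      (by linarith [abs_lt.mp (hadj (m-1) (m-2) adj_qq)])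
      (hnadj (m+1) (m-2) ne_p1q2 na_p1q2)
  · rcases le_abs.mp hbc with h | h <;> linarith [hm (m+1), hm (m-1)]

theorem distGraph_no_long_induced_cycle
    (d N : ℕ) (hd : 1 ≤ d) (x : Fin N → EuclideanSpace ℝ (Fin d))
    (e1 : EuclideanSpace ℝ (Fin d))
    (he1 : e1 = EuclideanSpace.single (⟨0, by omega⟩ : Fin d) (1 : ℝ))
    (L : Set (EuclideanSpace ℝ (Fin d)))
    (hL : L = Set.range (fun t : ℝ => t • e1))
    (hx : ∀ i, Metric.infDist (x i) L ≤ Real.sqrt 3 / 4) :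
    ¬ ∃ n : ℕ, 5 ≤ n ∧ Nonempty (SimpleGraph.cycleGraph n ↪g distGraph x) := by
  classical
  subst he1 hL
  rintro ⟨n, hn, ⟨φ⟩⟩
  obtain ⟨k, rfl⟩ : ∃ k, n = k + 5 := ⟨n - 5, by omega⟩
  set z : Fin d := ⟨0, by omega⟩ with hz
  set L := Set.range (fun t : ℝ => t • EuclideanSpace.single z (1:ℝ)) with hL
  have hLne : L.Nonempty := ⟨(0:ℝ) • EuclideanSpace.single z (1:ℝ), ⟨0, rfl⟩⟩
  set S : Fin N → ℝ := fun i => ∑ l ∈ Finset.univ.erase z, (x i l)^2 with hS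
  have hS0 : ∀ i, 0 ≤ S i := fun i => Finset.sum_nonneg fun l _ => sq_nonneg _
  have hSle : ∀ i, S i ≤ 3/16 := by
    intro i
    have key : ∀ t : ℝ, Real.sqrt (S i) ≤ dist (x i) (t • EuclideanSpace.single z (1:ℝ)) := by
      intro t
      rw [EuclideanSpace.dist_eq]
      apply Real.sqrt_le_sqrt
      calc S i = ∑ l ∈ Finset.univ.erase z,
            dist (x i l) ((t • EuclideanSpace.single z (1:ℝ)) l) ^ 2 := by
            apply Finset.sum_congr rfl
            intro l hl
            have hlz : l ≠ z := (Finset.mem_erase.mp hl).1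
            rw [PiLp.smul_apply, EuclideanSpace.single_apply, if_neg hlz]
            simp [Real.dist_eq]
        _ ≤ ∑ l, dist (x i l) ((t • EuclideanSpace.single z (1:ℝ)) l) ^ 2 :=
            Finset.sum_le_sum_of_subset_of_nonneg (Finset.subset_univ _)
              (fun l _ _ => sq_nonneg _)
    have h2 : Real.sqrt (S i) ≤ Metric.infDist (x i) L := by
      by_contra hcon
      push_neg at hcon
      obtain ⟨y, hyL, hy⟩ := (Metric.infDist_lt_iff hLne).mp hcon
      obtain ⟨t, rfl⟩ := hyL
      exact absurd hy (not_lt.mpr (key t))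
    have h3 : Real.sqrt (S i) ≤ Real.sqrt 3 / 4 := h2.trans (hx i)
    nlinarith [Real.sq_sqrt (hS0 i), Real.sq_sqrt (show (0:ℝ) ≤ 3 by norm_num),
      Real.sqrt_nonneg 3, Real.sqrt_nonneg (S i)]
  have hcross : ∀ p q : Fin N,
      ∑ l ∈ Finset.univ.erase z, (x p l - x q l)^2 ≤ 3/4 := by
    intro p q
    have expand : ∑ l ∈ Finset.univ.erase z, (x p l - x q l)^2
        = S p - 2 * (∑ l ∈ Finset.univ.erase z, x p l * x q l) + S q := by
      rw [hS, Finset.mul_sum, ← Finset.sum_sub_distrib, ← Finset.sum_add_distrib]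
      apply Finset.sum_congr rfl
      intro l _
      ring
    have cs := Finset.sum_mul_sq_le_sq_mul_sq (Finset.univ.erase z)
      (fun l => x p l) (fun l => x q l)
    rw [expand]
    nlinarith [hSle p, hSle q, hS0 p, hS0 q,
      sq_nonneg ((∑ l ∈ Finset.univ.erase z, x p l * x q l) + 3/16)]
  have hdecomp : ∀ p q : Fin N, ‖x p - x q‖^2
      = (x p z - x q z)^2 + ∑ l ∈ Finset.univ.erase z, (x p l - x q l)^2 := by
    intro p q
    rw [EuclideanSpace.norm_eq]
    rw [Real.sq_sqrt (Finset.sum_nonneg fun l _ => sq_nonneg _)]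
    rw [← Finset.sum_erase_add _ _ (Finset.mem_univ z)]
    simp only [PiLp.sub_apply, Real.norm_eq_abs, sq_abs]
    ring
  set a : Fin (k+5) → ℝ := fun i => x (φ i) z with ha
  apply cycle_combo k a
  · intro i j hij
    have h2 : (distGraph x).Adj (φ i) (φ j) := φ.map_adj_iff.mpr hij
    have h3 : ‖x (φ i) - x (φ j)‖ < 1 := h2.2
    have hsum : 0 ≤ ∑ l ∈ Finset.univ.erase z, (x (φ i) l - x (φ j) l)^2 :=
      Finset.sum_nonneg fun l _ => sq_nonneg _
    nlinarith [hdecomp (φ i) (φ j), sq_abs (a i - a j), abs_nonneg (a i - a j),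
      norm_nonneg (x (φ i) - x (φ j))]
  · intro i j hne hna
    have h1 : ¬ (distGraph x).Adj (φ i) (φ j) := fun h => hna (φ.map_adj_iff.mp h)
    have hfin : φ i ≠ φ j := fun h => hne (φ.injective h)
    have h2 : 1 ≤ ‖x (φ i) - x (φ j)‖ := by
      by_contra hcon
      push_neg at hcon
      exact h1 ⟨hfin, hcon⟩
    nlinarith [hdecomp (φ i) (φ j), hcross (φ i) (φ j), sq_abs (a i - a j),
      abs_nonneg (a i - a j), norm_nonneg (x (φ i) - x (φ j))]
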